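/- Let X be a pre-ordered Banach space whose closed cone X₊ is generating (X = X₊ − X₊). Then there exist a constant α > 0 and continuous maps p, m : X → X₊ that are positively homogeneous (p(t•x) = t•p(x) and m(t•x) = t•m(x) for all t ≥ 0 and x ∈ X) such that x = p(x) − m(x) and ‖p(x)‖ + ‖m(x)‖ ≤ α‖x‖ for all x ∈ X. -/

import Mathlib

open Filter Topology Set Metric

theorem ando_decomp {X : Type*} [NormedAddCommGroup X] [NormedSpace ℝ X] [CompleteSpace X]
    (C : Set X) (hclosed : IsClosed C)
    (hadd : ∀ x ∈ C, ∀ y ∈ C, x + y ∈ C)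
    (hsmul : ∀ (t : ℝ), 0 ≤ t → ∀ x ∈ C, t • x ∈ C)
    (hgen : ∀ x : X, ∃ a ∈ C, ∃ b ∈ C, x = a - b) :
    ∃ K : ℝ, 0 < K ∧ ∀ x : X, ∃ a ∈ C, ∃ b ∈ C,
      x = a - b ∧ ‖a‖ ≤ K * ‖x‖ ∧ ‖b‖ ≤ K * ‖x‖ := by
  classical
  have hO : (0 : X) ∈ C := by
    obtain ⟨a, ha, -⟩ := hgen 0
    simpa using hsmul 0 le_rfl a ha
  set A : Set X := {x | ∃ a ∈ C, ∃ b ∈ C, x = a - b ∧ ‖a‖ ≤ 1 ∧ ‖b‖ ≤ 1} with hA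
  have hAconv : Convex ℝ A := by
    rintro x ⟨a, ha, b, hb, rfl, hna, hnb⟩ y ⟨a', ha', b', hb', rfl, hna', hnb'⟩ s t hs ht hst
    refine ⟨s • a + t • a', hadd _ (hsmul s hs a ha) _ (hsmul t ht a' ha'),
      s • b + t • b', hadd _ (hsmul s hs b hb) _ (hsmul t ht b' hb'), ?_, ?_, ?_⟩
    · rw [smul_sub, smul_sub]; abel
    · calc ‖s • a + t • a'‖ ≤ ‖s • a‖ + ‖t • a'‖ := norm_add_le _ _
        _ = s * ‖a‖ + t * ‖a'‖ := by
            rw [norm_smul, norm_smul, Real.norm_of_nonneg hs, Real.norm_of_nonneg ht]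
        _ ≤ s * 1 + t * 1 := by gcongr
        _ = 1 := by linarith
    · calc ‖s • b + t • b'‖ ≤ ‖s • b‖ + ‖t • b'‖ := norm_add_le _ _
        _ = s * ‖b‖ + t * ‖b'‖ := by
            rw [norm_smul, norm_smul, Real.norm_of_nonneg hs, Real.norm_of_nonneg ht]
        _ ≤ s * 1 + t * 1 := by gcongr
        _ = 1 := by linarith
  have hAsymm : ∀ x ∈ A, -x ∈ A := by
    rintro x ⟨a, ha, b, hb, rfl, hna, hnb⟩
    exact ⟨b, hb, a, ha, by abel, hnb, hna⟩
  set E := closure A with hE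
  -- Baire category: E has nonempty interior
  have hcover : ⋃ n : ℕ, ((fun x : X => ((n : ℝ) + 1)⁻¹ • x) ⁻¹' E) = univ := by
    refine eq_univ_of_forall fun x => mem_iUnion.2 ?_
    obtain ⟨a, ha, b, hb, rfl⟩ := hgen x
    obtain ⟨n, hn⟩ := exists_nat_ge (max ‖a‖ ‖b‖)
    refine ⟨n, subset_closure ?_⟩
    have hc : (0:ℝ) ≤ ((n : ℝ) + 1)⁻¹ := by positivity
    have hle : ∀ y : X, ‖y‖ ≤ (n:ℝ) → ‖((n : ℝ) + 1)⁻¹ • y‖ ≤ 1 := by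
      intro y hy
      rw [norm_smul, Real.norm_of_nonneg hc, inv_mul_le_iff₀ (by positivity), mul_one]
      linarith
    exact ⟨((n : ℝ) + 1)⁻¹ • a, hsmul _ hc a ha, ((n : ℝ) + 1)⁻¹ • b, hsmul _ hc b hb,
      by simp [smul_sub], hle a ((le_max_left _ _).trans hn), hle b ((le_max_right _ _).trans hn)⟩
  obtain ⟨n, y, hy⟩ := nonempty_interior_of_iUnion_of_closed
    (fun n : ℕ => (isClosed_closure).preimage (continuous_const_smul _)) hcover
  have hEne : (interior E).Nonempty := by
    have hc : ((n : ℝ) + 1)⁻¹ ≠ 0 := by positivity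
    have h1 : (fun x : X => ((n : ℝ) + 1)⁻¹ • x) ⁻¹' E
        = (Homeomorph.smulOfNeZero _ hc) ⁻¹' E := rfl
    have hy' : y ∈ ⇑(Homeomorph.smulOfNeZero _ hc) ⁻¹' (interior (closure A)) := by
      rw [Homeomorph.preimage_interior]
      exact hy
    exact ⟨_, hy'⟩
  obtain ⟨e, he⟩ := hEne
  have hnegE : (Neg.neg : X → X) ⁻¹' E = E := by
    have h1 : (Neg.neg : X → X) ⁻¹' A = A := by
      ext z
      constructor
      · intro hz; simpa using hAsymm _ hz
      · intro hz; exact hAsymm _ hz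
    have h2 : (Neg.neg : X → X) = ⇑(Homeomorph.neg X) := rfl
    rw [hE, h2, Homeomorph.preimage_closure, ← h2, h1]
  have hne : -e ∈ interior E := by
    have : (Neg.neg : X → X) ⁻¹' (interior E) = interior E := by
      have h2 : (Neg.neg : X → X) = ⇑(Homeomorph.neg X) := rfl
      rw [h2, Homeomorph.preimage_interior, ← h2, hnegE]
    rw [← this]
    simpa using he
  have h0 : (0 : X) ∈ interior E := by
    have := (hAconv.closure.interior) he hne
      (by norm_num : (0:ℝ) ≤ (1:ℝ)/2) (by norm_num : (0:ℝ) ≤ (1:ℝ)/2) (by norm_num)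
    simpa using this
  obtain ⟨r, hr, hball⟩ := Metric.mem_nhds_iff.1 (mem_interior_iff_mem_nhds.1 h0)
  have hballE : ∀ z : X, ‖z‖ < r → z ∈ E := by
    intro z hz
    exact hball (by simpa [mem_ball, dist_zero_right] using hz)
  -- scaled approximation
  have hscale : ∀ (c : ℝ), 0 < c → ∀ y : X, ‖y‖ < c * r → ∀ δ : ℝ, 0 < δ →
      ∃ a ∈ C, ∃ b ∈ C, ‖a‖ ≤ c ∧ ‖b‖ ≤ c ∧ ‖y - (a - b)‖ < δ := by
    intro c hc y hy δ hδ
    have h1 : ‖c⁻¹ • y‖ < r := by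
      rw [norm_smul, Real.norm_of_nonneg (by positivity), inv_mul_lt_iff₀ hc]
      linarith [hy]
    have h2 := hballE _ h1
    rw [hE, Metric.mem_closure_iff] at h2
    obtain ⟨w, ⟨a, ha, b, hb, rfl, hna, hnb⟩, hw⟩ := h2 (δ / c) (by positivity)
    refine ⟨c • a, hsmul c hc.le a ha, c • b, hsmul c hc.le b hb, ?_, ?_, ?_⟩
    · rw [norm_smul, Real.norm_of_nonneg hc.le]
      calc c * ‖a‖ ≤ c * 1 := by gcongr
        _ = c := mul_one c
    · rw [norm_smul, Real.norm_of_nonneg hc.le]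
      calc c * ‖b‖ ≤ c * 1 := by gcongr
        _ = c := mul_one c
    · have heq : y - (c • a - c • b) = c • (c⁻¹ • y - (a - b)) := by
        rw [smul_sub, smul_sub, smul_inv_smul₀ hc.ne']
      rw [heq, norm_smul, Real.norm_of_nonneg hc.le]
      rw [dist_eq_norm] at hw
      calc c * ‖c⁻¹ • y - (a - b)‖ < c * (δ / c) := by gcongr
        _ = δ := by field_simp
  -- key iteration
  have key : ∀ x : X, ‖x‖ < r → ∃ a ∈ C, ∃ b ∈ C, x = a - b ∧ ‖a‖ ≤ 2 ∧ ‖b‖ ≤ 2 := by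
    intro x hx
    have hstep : ∀ (n : ℕ) (y : X), ∃ z : X × X, ‖y‖ < (2⁻¹:ℝ)^n * r →
        (z.1 ∈ C ∧ z.2 ∈ C ∧ ‖z.1‖ ≤ (2⁻¹:ℝ)^n ∧ ‖z.2‖ ≤ (2⁻¹:ℝ)^n ∧
          ‖y - (z.1 - z.2)‖ < (2⁻¹:ℝ)^(n+1) * r) := by
      intro n y
      by_cases hy : ‖y‖ < (2⁻¹:ℝ)^n * r
      · obtain ⟨a, ha, b, hb, hna, hnb, hd⟩ :=
          hscale ((2⁻¹:ℝ)^n) (by positivity) y hy ((2⁻¹:ℝ)^(n+1) * r) (by positivity)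
        exact ⟨(a, b), fun _ => ⟨ha, hb, hna, hnb, hd⟩⟩
      · exact ⟨(0, 0), fun h => absurd h hy⟩
    choose F hF using hstep
    let u : ℕ → X := fun n => Nat.rec x (fun n yn => yn - ((F n yn).1 - (F n yn).2)) n
    have hu0 : u 0 = x := rfl
    have husucc : ∀ n, u (n+1) = u n - ((F n (u n)).1 - (F n (u n)).2) := fun n => rfl
    have hinv : ∀ n, ‖u n‖ < (2⁻¹:ℝ)^n * r := by
      intro n
      induction n with
      | zero => simpa [hu0] using hx
      | succ n ih =>
        rw [husucc n]
        exact (hF n (u n) ih).2.2.2.2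
    have hspec : ∀ n, (F n (u n)).1 ∈ C ∧ (F n (u n)).2 ∈ C ∧
        ‖(F n (u n)).1‖ ≤ (2⁻¹:ℝ)^n ∧ ‖(F n (u n)).2‖ ≤ (2⁻¹:ℝ)^n := by
      intro n
      obtain ⟨p1, p2, p3, p4, -⟩ := hF n (u n) (hinv n)
      exact ⟨p1, p2, p3, p4⟩
    set a : ℕ → X := fun n => (F n (u n)).1 with haf
    set b : ℕ → X := fun n => (F n (u n)).2 with hbf
    have hgeos : Summable (fun n : ℕ => (2⁻¹:ℝ)^n) :=
      summable_geometric_of_lt_one (by norm_num) (by norm_num)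
    have hsa : Summable a :=
      Summable.of_norm_bounded hgeos (fun n => (hspec n).2.2.1)
    have hsb : Summable b :=
      Summable.of_norm_bounded hgeos (fun n => (hspec n).2.2.2)
    have hgeo : ∑' n : ℕ, (2⁻¹:ℝ)^n = 2 := by
      simpa using tsum_geometric_two
    have hCsum : ∀ (f : ℕ → X), (∀ n, f n ∈ C) → Summable f → (∑' n, f n) ∈ C := by
      intro f hf hs
      refine hclosed.mem_of_tendsto hs.hasSum.tendsto_sum_nat (Eventually.of_forall fun N => ?_)
      induction N with
      | zero => simpa using hO
      | succ N ih =>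
        rw [Finset.sum_range_succ]
        exact hadd _ ih _ (hf N)
    have hnormsum : ∀ (f : ℕ → X), (∀ n, ‖f n‖ ≤ (2⁻¹:ℝ)^n) → Summable f → ‖∑' n, f n‖ ≤ 2 := by
      intro f hf hs
      have hns : Summable (fun n => ‖f n‖) :=
        Summable.of_nonneg_of_le (fun n => norm_nonneg _) hf hgeos
      calc ‖∑' n, f n‖ ≤ ∑' n, ‖f n‖ := norm_tsum_le_tsum_norm hns
        _ ≤ ∑' n : ℕ, (2⁻¹:ℝ)^n := Summable.tsum_le_tsum hf hns hgeos
        _ = 2 := hgeo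
    refine ⟨∑' n, a n, hCsum a (fun n => (hspec n).1) hsa,
      ∑' n, b n, hCsum b (fun n => (hspec n).2.1) hsb, ?_,
      hnormsum a (fun n => (hspec n).2.2.1) hsa, hnormsum b (fun n => (hspec n).2.2.2) hsb⟩
    have hpart : ∀ N, (∑ n ∈ Finset.range N, a n) - (∑ n ∈ Finset.range N, b n) = x - u N := by
      intro N
      induction N with
      | zero => rw [hu0]; simp
      | succ N ih =>
        rw [Finset.sum_range_succ, Finset.sum_range_succ, husucc N]
        have h3 : (∑ n ∈ Finset.range N, a n) + a N - ((∑ n ∈ Finset.range N, b n) + b N)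
            = ((∑ n ∈ Finset.range N, a n) - (∑ n ∈ Finset.range N, b n)) + (a N - b N) := by
          abel
        rw [h3, ih]
        abel
    have hu0' : Tendsto u atTop (𝓝 (0:X)) := by
      refine squeeze_zero_norm (fun n => (hinv n).le) ?_
      have := (tendsto_pow_atTop_nhds_zero_of_lt_one
        (by norm_num : (0:ℝ) ≤ 2⁻¹) (by norm_num : (2⁻¹:ℝ) < 1)).mul_const r
      simpa using this
    have h1 : Tendsto (fun N => (∑ n ∈ Finset.range N, a n) - (∑ n ∈ Finset.range N, b n))
        atTop (𝓝 ((∑' n, a n) - ∑' n, b n)) :=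
      (hsa.hasSum.tendsto_sum_nat).sub (hsb.hasSum.tendsto_sum_nat)
    have h2 : Tendsto (fun N => x - u N) atTop (𝓝 (x - 0)) :=
      tendsto_const_nhds.sub hu0'
    rw [sub_zero] at h2
    exact (tendsto_nhds_unique (by simpa only [hpart] using h1) h2).symm
  -- conclusion
  refine ⟨4 / r, by positivity, fun x => ?_⟩
  rcases eq_or_ne x 0 with rfl | hx
  · exact ⟨0, hO, 0, hO, by simp, by simp, by simp⟩
  · have hnx : (0:ℝ) < ‖x‖ := norm_pos_iff.2 hx
    set c : ℝ := r / (2 * ‖x‖) with hc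
    have hcpos : 0 < c := by positivity
    have hy : ‖c • x‖ < r := by
      rw [norm_smul, Real.norm_of_nonneg hcpos.le, hc, div_mul_eq_mul_div, mul_comm,
        div_lt_iff₀ (by positivity)]
      nlinarith
    obtain ⟨A', hAC, B, hBC, hxAB, hnA, hnB⟩ := key (c • x) hy
    have hcinv : c⁻¹ = 2 * ‖x‖ / r := by rw [hc]; field_simp
    refine ⟨c⁻¹ • A', hsmul _ (by positivity) _ hAC,
      c⁻¹ • B, hsmul _ (by positivity) _ hBC, ?_, ?_, ?_⟩
    · rw [← smul_sub, ← hxAB, inv_smul_smul₀ hcpos.ne']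
    · rw [norm_smul, Real.norm_of_nonneg (by positivity), hcinv]
      calc 2 * ‖x‖ / r * ‖A'‖ ≤ 2 * ‖x‖ / r * 2 := by gcongr
        _ = 4 / r * ‖x‖ := by ring
    · rw [norm_smul, Real.norm_of_nonneg (by positivity), hcinv]
      calc 2 * ‖x‖ / r * ‖B‖ ≤ 2 * ‖x‖ / r * 2 := by gcongr
        _ = 4 / r * ‖x‖ := by ring

theorem approx_sel {X : Type*} [NormedAddCommGroup X] [NormedSpace ℝ X]
    (F : X → Set X) (hne : ∀ x, (F x).Nonempty) (hconv : ∀ x, Convex ℝ (F x))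
    (hlsc : ∀ x : X, ∀ a ∈ F x, ∀ ε : ℝ, 0 < ε → ∀ᶠ x' in 𝓝 x, ∃ a' ∈ F x', ‖a' - a‖ < ε)
    (ε : ℝ) (hε : 0 < ε) :
    ∃ g : X → X, Continuous g ∧ ∀ x : X, ∃ z ∈ F x, ‖g x - z‖ < ε := by
  classical
  choose y hy using hne
  set V : X → Set X := fun i => {x | ∃ a ∈ F x, ‖a - y i‖ < ε/2} with hV
  have hVopen : ∀ i, IsOpen (V i) := by
    intro i
    rw [isOpen_iff_mem_nhds]
    rintro x ⟨a, haF, hab⟩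
    have hδ : 0 < ε/2 - ‖a - y i‖ := by linarith
    filter_upwards [hlsc x a haF _ hδ] with x' hx'
    obtain ⟨a', ha', haa'⟩ := hx'
    refine ⟨a', ha', ?_⟩
    calc ‖a' - y i‖ ≤ ‖a' - a‖ + ‖a - y i‖ := norm_sub_le_norm_sub_add_norm_sub _ _ _
      _ < ε/2 := by linarith
  have hVcover : (univ : Set X) ⊆ ⋃ i, V i := fun x _ =>
    mem_iUnion.2 ⟨x, y x, hy x, by simpa using (by linarith : (0:ℝ) < ε/2)⟩
  obtain ⟨φ, hφ⟩ := PartitionOfUnity.exists_isSubordinate isClosed_univ V hVopen hVcover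
  refine ⟨fun x => ∑ᶠ i, φ i x • y i,
    φ.continuous_finsum_smul (fun i x _ => continuous_const.continuousAt), fun x => ?_⟩
  have hfin : {i : X | φ i x ≠ 0}.Finite := by
    have := φ.locallyFinite.point_finite x
    simpa [Function.support] using this
  set T := hfin.toFinset with hT
  have hmemT : ∀ i, i ∈ T ↔ φ i x ≠ 0 := by
    intro i; rw [hT, Set.Finite.mem_toFinset]; rfl
  have hgx : ∑ᶠ i, φ i x • y i = ∑ i ∈ T, φ i x • y i := by
    refine finsum_eq_sum_of_support_subset _ ?_
    intro i hi
    have : φ i x ≠ 0 := by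
      intro h
      apply hi
      simp [h]
    simpa [hmemT] using this
  have hsum1 : ∑ i ∈ T, φ i x = 1 := by
    have h1 : ∑ᶠ i, φ i x = 1 := φ.sum_eq_one (mem_univ x)
    rw [← h1]
    refine (finsum_eq_sum_of_support_subset _ ?_).symm
    intro i hi
    simpa [hmemT] using hi
  have hex : ∀ i ∈ T, ∃ a ∈ F x, ‖a - y i‖ < ε/2 := by
    intro i hi
    have h1 : x ∈ tsupport (φ i) := subset_tsupport _ ((hmemT i).1 hi)
    exact hφ i h1
  set z : X → X := fun i => if h : ∃ a ∈ F x, ‖a - y i‖ < ε/2 then h.choose else y x with hz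
  have hzF : ∀ i ∈ T, z i ∈ F x ∧ ‖z i - y i‖ < ε/2 := by
    intro i hi
    have h := hex i hi
    rw [hz]
    simp only [dif_pos h]
    exact ⟨h.choose_spec.1, h.choose_spec.2⟩
  set w : X := ∑ i ∈ T, φ i x • z i with hw
  have hwF : w ∈ F x :=
    (hconv x).sum_mem (fun i _ => φ.nonneg i x) hsum1 (fun i hi => (hzF i hi).1)
  refine ⟨w, hwF, ?_⟩
  have hdiff : (∑ᶠ i, φ i x • y i) - w = ∑ i ∈ T, φ i x • (y i - z i) := by
    rw [hgx, hw, ← Finset.sum_sub_distrib]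
    congr 1
    ext i
    rw [smul_sub]
  rw [hdiff]
  calc ‖∑ i ∈ T, φ i x • (y i - z i)‖ ≤ ∑ i ∈ T, ‖φ i x • (y i - z i)‖ :=
        norm_sum_le _ _
    _ ≤ ∑ i ∈ T, φ i x * (ε/2) := by
        refine Finset.sum_le_sum fun i hi => ?_
        rw [norm_smul, Real.norm_of_nonneg (φ.nonneg i x)]
        have h1 : ‖y i - z i‖ ≤ ε/2 := by
          rw [norm_sub_rev]
          exact (hzF i hi).2.le
        exact mul_le_mul_of_nonneg_left h1 (φ.nonneg i x)
    _ = ε/2 := by rw [← Finset.sum_mul, hsum1, one_mul]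
    _ < ε := by linarith

theorem michael_sel {X : Type*} [NormedAddCommGroup X] [NormedSpace ℝ X] [CompleteSpace X]
    (F : X → Set X) (hne : ∀ x, (F x).Nonempty) (hconv : ∀ x, Convex ℝ (F x))
    (hlsc : ∀ x : X, ∀ a ∈ F x, ∀ ε : ℝ, 0 < ε → ∀ᶠ x' in 𝓝 x, ∃ a' ∈ F x', ‖a' - a‖ < ε) :
    ∃ f : X → X, Continuous f ∧ ∀ x : X, f x ∈ closure (F x) := by
  classical
  have step : ∀ (g : X → X) (ε : ℝ), 0 < ε → Continuous g →
      (∀ x, ∃ z ∈ F x, ‖g x - z‖ < ε) →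
      ∃ g' : X → X, Continuous g' ∧ (∀ x, ∃ z ∈ F x, ‖g' x - z‖ < ε/4) ∧
        ∀ x, ‖g' x - g x‖ ≤ 2*ε := by
    intro g ε hε hg happ
    set F' : X → Set X := fun x => F x ∩ ball (g x) ε with hF'
    have hne' : ∀ x, (F' x).Nonempty := by
      intro x
      obtain ⟨z, hz, hnz⟩ := happ x
      exact ⟨z, hz, by rwa [mem_ball, dist_eq_norm, norm_sub_rev]⟩
    have hconv' : ∀ x, Convex ℝ (F' x) := fun x => (hconv x).inter (convex_ball _ _)
    have hlsc' : ∀ x : X, ∀ a ∈ F' x, ∀ ε' : ℝ, 0 < ε' →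
        ∀ᶠ x' in 𝓝 x, ∃ a' ∈ F' x', ‖a' - a‖ < ε' := by
      rintro x a ⟨haF, hab⟩ ε' hε'
      rw [mem_ball, dist_eq_norm] at hab
      have hδ : 0 < ε - ‖a - g x‖ := by linarith
      set δ := ε - ‖a - g x‖ with hδdef
      have h1 := hlsc x a haF (min ε' (δ/2)) (by positivity)
      have h2 : ∀ᶠ x' in 𝓝 x, dist (g x') (g x) < δ/2 :=
        Metric.tendsto_nhds.mp (hg.tendsto x) (δ/2) (by positivity)
      filter_upwards [h1, h2] with x' hx' hgx'
      obtain ⟨a', ha', haa'⟩ := hx'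
      have hm := lt_min_iff.mp haa'
      refine ⟨a', ⟨ha', ?_⟩, hm.1⟩
      rw [mem_ball, dist_eq_norm]
      rw [dist_eq_norm] at hgx'
      calc ‖a' - g x'‖ = ‖(a' - a) + (a - g x) + (g x - g x')‖ := by
            congr 1; abel
        _ ≤ ‖(a' - a) + (a - g x)‖ + ‖g x - g x'‖ := norm_add_le _ _
        _ ≤ ‖a' - a‖ + ‖a - g x‖ + ‖g x - g x'‖ := by
            gcongr
            exact norm_add_le _ _
        _ < δ/2 + ‖a - g x‖ + δ/2 := by
            rw [norm_sub_rev] at hgx'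
            gcongr
            exact hm.2
        _ = ε := by rw [hδdef]; ring
    obtain ⟨g', hg', happ'⟩ := approx_sel F' hne' hconv' hlsc' (ε/4) (by positivity)
    refine ⟨g', hg', fun x => ?_, fun x => ?_⟩
    · obtain ⟨z, ⟨hz, -⟩, hnz⟩ := happ' x
      exact ⟨z, hz, hnz⟩
    · obtain ⟨z, ⟨hz, hzb⟩, hnz⟩ := happ' x
      rw [mem_ball, dist_eq_norm] at hzb
      calc ‖g' x - g x‖ = ‖(g' x - z) + (z - g x)‖ := by congr 1; abel
        _ ≤ ‖g' x - z‖ + ‖z - g x‖ := norm_add_le _ _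
        _ ≤ ε/4 + ε := add_le_add hnz.le hzb.le
        _ ≤ 2*ε := by linarith
  -- build the sequence
  obtain ⟨g0, hg0c, hg0a⟩ := approx_sel F hne hconv hlsc 1 one_pos
  have hstep' : ∀ (n : ℕ) (g : X → X), ∃ g' : X → X,
      (Continuous g ∧ ∀ x, ∃ z ∈ F x, ‖g x - z‖ < (4⁻¹:ℝ)^n) →
      (Continuous g' ∧ (∀ x, ∃ z ∈ F x, ‖g' x - z‖ < (4⁻¹:ℝ)^(n+1)) ∧
        ∀ x, ‖g' x - g x‖ ≤ 2*(4⁻¹:ℝ)^n) := by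
    intro n g
    by_cases h : Continuous g ∧ ∀ x, ∃ z ∈ F x, ‖g x - z‖ < (4⁻¹:ℝ)^n
    · obtain ⟨g', h1, h2, h3⟩ := step g ((4⁻¹:ℝ)^n) (by positivity) h.1 h.2
      refine ⟨g', fun _ => ⟨h1, fun x => ?_, h3⟩⟩
      obtain ⟨z, hz, hnz⟩ := h2 x
      refine ⟨z, hz, ?_⟩
      calc ‖g' x - z‖ < (4⁻¹:ℝ)^n/4 := hnz
        _ = (4⁻¹:ℝ)^(n+1) := by ring
    · exact ⟨g0, fun hh => absurd hh h⟩
  choose G hG using hstep'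
  set u : ℕ → X → X := fun n => Nat.rec g0 (fun n gn => G n gn) n with hu
  have hu0 : u 0 = g0 := rfl
  have husucc : ∀ n, u (n+1) = G n (u n) := fun n => rfl
  have hinv : ∀ n, Continuous (u n) ∧ ∀ x, ∃ z ∈ F x, ‖u n x - z‖ < (4⁻¹:ℝ)^n := by
    intro n
    induction n with
    | zero =>
      refine ⟨hg0c, fun x => ?_⟩
      obtain ⟨z, hz, hnz⟩ := hg0a x
      exact ⟨z, hz, by simpa [hu0] using hnz⟩
    | succ n ih =>
      rw [husucc n]
      exact ⟨(hG n (u n) ih).1, (hG n (u n) ih).2.1⟩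
  have hclose : ∀ n (x : X), dist (u n x) (u (n+1) x) ≤ 2 * (4⁻¹:ℝ)^n := by
    intro n x
    rw [husucc n, dist_eq_norm, norm_sub_rev]
    exact (hG n (u n) (hinv n)).2.2 x
  have hcauchy : ∀ x, CauchySeq (fun n => u n x) := by
    intro x
    exact cauchySeq_of_le_geometric (4⁻¹:ℝ) 2 (by norm_num) (fun n => hclose n x)
  set f : X → X := fun x => limUnder atTop (fun n => u n x) with hf
  have htend : ∀ x, Tendsto (fun n => u n x) atTop (𝓝 (f x)) := fun x =>
    (hcauchy x).tendsto_limUnder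
  have hunif : ∀ (n : ℕ) (x : X), dist (u n x) (f x) ≤ 2 * (4⁻¹:ℝ)^n / (1 - 4⁻¹) := by
    intro n x
    exact dist_le_of_le_geometric_of_tendsto (4⁻¹:ℝ) 2 (by norm_num)
      (fun m => hclose m x) (htend x) n
  have hucont : TendstoUniformly (fun n x => u n x) f atTop := by
    rw [Metric.tendstoUniformly_iff]
    intro ε hε
    have hlim : Tendsto (fun n : ℕ => 2 * (4⁻¹:ℝ)^n / (1 - 4⁻¹)) atTop (𝓝 0) := by
      have h1 : Tendsto (fun n : ℕ => (4⁻¹:ℝ)^n) atTop (𝓝 0) :=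
        tendsto_pow_atTop_nhds_zero_of_lt_one (by norm_num) (by norm_num)
      have := (h1.const_mul 2).div_const (1 - 4⁻¹)
      simpa using this
    filter_upwards [hlim.eventually (eventually_lt_nhds hε)] with n hn x
    calc dist (f x) (u n x) = dist (u n x) (f x) := dist_comm _ _
      _ ≤ 2 * (4⁻¹:ℝ)^n / (1 - 4⁻¹) := hunif n x
      _ < ε := hn
  refine ⟨f, hucont.continuous (Frequently.of_forall fun n => (hinv n).1), fun x => ?_⟩
  choose z hzF hzn using fun n => (hinv n).2 x
  have hztend : Tendsto z atTop (𝓝 (f x)) := by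
    rw [tendsto_iff_dist_tendsto_zero]
    have hb : ∀ n, dist (z n) (f x) ≤ (4⁻¹:ℝ)^n + dist (u n x) (f x) := by
      intro n
      calc dist (z n) (f x) ≤ dist (z n) (u n x) + dist (u n x) (f x) := dist_triangle _ _ _
        _ ≤ (4⁻¹:ℝ)^n + dist (u n x) (f x) := by
            gcongr
            rw [dist_comm, dist_eq_norm]
            exact (hzn n).le
    have hlim : Tendsto (fun n : ℕ => (4⁻¹:ℝ)^n + dist (u n x) (f x)) atTop (𝓝 0) := by
      have h1 : Tendsto (fun n : ℕ => (4⁻¹:ℝ)^n) atTop (𝓝 0) :=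
        tendsto_pow_atTop_nhds_zero_of_lt_one (by norm_num) (by norm_num)
      have h2 : Tendsto (fun n => dist (u n x) (f x)) atTop (𝓝 0) := by
        rw [← tendsto_iff_dist_tendsto_zero]
        exact htend x
      simpa using h1.add h2
    exact squeeze_zero (fun n => dist_nonneg) hb hlim
  exact mem_closure_of_tendsto hztend (Eventually.of_forall hzF)

/-- If `X` is a pre-ordered Banach space whose closed cone `Xpos` is
generating, then there exist `α > 0` and continuous positively homogeneous maps
`p, m : X → Xpos` with `x = p x - m x` and `‖p x‖ + ‖m x‖ ≤ α * ‖x‖` for all `x`. -/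
theorem stmt3
    {X : Type*} [NormedAddCommGroup X] [NormedSpace ℝ X] [CompleteSpace X]
    (Xpos : Set X) (hXpos_closed : IsClosed Xpos)
    (hXpos_add : ∀ x ∈ Xpos, ∀ y ∈ Xpos, x + y ∈ Xpos)
    (hXpos_smul : ∀ (t : ℝ), 0 ≤ t → ∀ x ∈ Xpos, t • x ∈ Xpos)
    (hgen : ∀ x : X, ∃ a ∈ Xpos, ∃ b ∈ Xpos, x = a - b) :
    ∃ (α : ℝ), 0 < α ∧ ∃ (p m : X → X),
      Continuous p ∧ Continuous m ∧
      (∀ x : X, p x ∈ Xpos) ∧ (∀ x : X, m x ∈ Xpos) ∧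
      (∀ (t : ℝ), 0 ≤ t → ∀ x : X, p (t • x) = t • p x) ∧
      (∀ (t : ℝ), 0 ≤ t → ∀ x : X, m (t • x) = t • m x) ∧
      (∀ x : X, x = p x - m x) ∧
      (∀ x : X, ‖p x‖ + ‖m x‖ ≤ α * ‖x‖) := by
  classical
  obtain ⟨K, hK, hdec⟩ := ando_decomp Xpos hXpos_closed hXpos_add hXpos_smul hgen
  have hO : (0 : X) ∈ Xpos := by
    obtain ⟨a, ha, -⟩ := hgen 0
    simpa using hXpos_smul 0 le_rfl a ha
  set F : X → Set X := fun x => {a | a ∈ Xpos ∧ a - x ∈ Xpos ∧ ‖a‖ < K * ‖x‖ + 1} with hF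
  have hne : ∀ x, (F x).Nonempty := by
    intro x
    obtain ⟨a, ha, b, hb, hab, hna, -⟩ := hdec x
    refine ⟨a, ha, ?_, by linarith⟩
    have : a - x = b := by rw [hab]; abel
    rw [this]; exact hb
  have hconv : ∀ x, Convex ℝ (F x) := by
    intro x
    rintro a₁ ⟨hc1, hd1, hn1⟩ a₂ ⟨hc2, hd2, hn2⟩ s t hs ht hst
    refine ⟨hXpos_add _ (hXpos_smul s hs _ hc1) _ (hXpos_smul t ht _ hc2), ?_, ?_⟩
    · have h4 : s • (a₁ - x) + t • (a₂ - x) = s • a₁ + t • a₂ - x := by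
        calc s • (a₁ - x) + t • (a₂ - x)
            = s • a₁ + t • a₂ - (s + t) • x := by rw [smul_sub, smul_sub, add_smul]; abel
          _ = s • a₁ + t • a₂ - x := by rw [hst, one_smul]
      rw [← h4]
      exact hXpos_add _ (hXpos_smul s hs _ hd1) _ (hXpos_smul t ht _ hd2)
    · have hnorm : ‖s • a₁ + t • a₂‖ ≤ s * ‖a₁‖ + t * ‖a₂‖ := by
        calc ‖s • a₁ + t • a₂‖ ≤ ‖s • a₁‖ + ‖t • a₂‖ := norm_add_le _ _
          _ = s * ‖a₁‖ + t * ‖a₂‖ := by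
              rw [norm_smul, norm_smul, Real.norm_of_nonneg hs, Real.norm_of_nonneg ht]
      rcases eq_or_lt_of_le hs with rfl | hs'
      · have ht1 : t = 1 := by linarith
        refine lt_of_le_of_lt hnorm ?_
        rw [ht1]; simpa using hn2
      · refine lt_of_le_of_lt hnorm ?_
        have h1 : s * ‖a₁‖ < s * (K * ‖x‖ + 1) := by exact mul_lt_mul_of_pos_left hn1 hs'
        have h2 : t * ‖a₂‖ ≤ t * (K * ‖x‖ + 1) := mul_le_mul_of_nonneg_left hn2.le ht
        have h3 : s * (K * ‖x‖ + 1) + t * (K * ‖x‖ + 1) = K * ‖x‖ + 1 := by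
          rw [← add_mul, hst, one_mul]
        linarith
  have hlsc : ∀ x : X, ∀ a ∈ F x, ∀ ε : ℝ, 0 < ε →
      ∀ᶠ x' in 𝓝 x, ∃ a' ∈ F x', ‖a' - a‖ < ε := by
    rintro x a ⟨hc, hd, hn⟩ ε hε
    set γ := K * ‖x‖ + 1 - ‖a‖ with hγ
    have hγpos : 0 < γ := by rw [hγ]; linarith
    set ρ := min (ε / (K + 1)) (γ / (2 * K + 1)) with hρ
    have hρpos : 0 < ρ := lt_min (by positivity) (by positivity)
    filter_upwards [Metric.ball_mem_nhds x hρpos] with x' hx'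
    rw [mem_ball, dist_eq_norm] at hx'
    obtain ⟨u, hu, v, hv, huv, hnu, hnv⟩ := hdec (x' - x)
    refine ⟨a + u, ⟨hXpos_add _ hc _ hu, ?_, ?_⟩, ?_⟩
    · have h5 : a + u - x' = (a - x) + v := by
        have : u - (x' - x) = v := by rw [huv]; abel
        calc a + u - x' = (a - x) + (u - (x' - x)) := by abel
          _ = (a - x) + v := by rw [this]
      rw [h5]
      exact hXpos_add _ hd _ hv
    · have h6 : ‖a + u‖ ≤ ‖a‖ + K * ‖x' - x‖ := by
        calc ‖a + u‖ ≤ ‖a‖ + ‖u‖ := norm_add_le _ _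
          _ ≤ ‖a‖ + K * ‖x' - x‖ := by linarith
      have h7 : ‖x‖ ≤ ‖x'‖ + ‖x' - x‖ := by
        calc ‖x‖ = ‖x' - (x' - x)‖ := by congr 1; abel
          _ ≤ ‖x'‖ + ‖x' - x‖ := norm_sub_le _ _
      have h8 : ‖x' - x‖ < ρ := hx'
      have h9 : ρ ≤ γ / (2 * K + 1) := min_le_right _ _
      have h10 : K * ‖x‖ ≤ K * ‖x'‖ + K * ‖x' - x‖ := by nlinarith
      -- ‖a‖ = K‖x‖ + 1 - γ
      have h11 : ‖a‖ = K * ‖x‖ + 1 - γ := by rw [hγ]; ring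
      have h12 : (2 * K + 1) * ‖x' - x‖ < γ := by
        calc (2 * K + 1) * ‖x' - x‖ < (2 * K + 1) * ρ := by
              have : (0:ℝ) < 2 * K + 1 := by linarith
              exact mul_lt_mul_of_pos_left h8 this
          _ ≤ (2 * K + 1) * (γ / (2 * K + 1)) := by
              have : (0:ℝ) < 2 * K + 1 := by linarith
              exact mul_le_mul_of_nonneg_left h9 (by linarith)
          _ = γ := by field_simp
      nlinarith [norm_nonneg (x' - x)]
    · have h13 : ‖a + u - a‖ = ‖u‖ := by congr 1; abel
      rw [h13]
      have h14 : ρ ≤ ε / (K + 1) := min_le_left _ _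
      calc ‖u‖ ≤ K * ‖x' - x‖ := hnu
        _ < K * ρ + ρ := by nlinarith [norm_nonneg (x' - x)]
        _ = (K + 1) * ρ := by ring
        _ ≤ (K + 1) * (ε / (K + 1)) := by nlinarith
        _ = ε := by field_simp
  obtain ⟨f, hfc, hfm⟩ := michael_sel F hne hconv hlsc
  -- pass to the closed version
  have hfG : ∀ x : X, f x ∈ Xpos ∧ f x - x ∈ Xpos ∧ ‖f x‖ ≤ K * ‖x‖ + 1 := by
    intro x
    have hGclosed : IsClosed {a : X | a ∈ Xpos ∧ a - x ∈ Xpos ∧ ‖a‖ ≤ K * ‖x‖ + 1} := by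
      have h1 : IsClosed {a : X | a - x ∈ Xpos} :=
        hXpos_closed.preimage (continuous_id.sub continuous_const)
      have h2 : IsClosed {a : X | ‖a‖ ≤ K * ‖x‖ + 1} :=
        isClosed_le continuous_norm continuous_const
      have h3 : {a : X | a ∈ Xpos ∧ a - x ∈ Xpos ∧ ‖a‖ ≤ K * ‖x‖ + 1}
          = (Xpos ∩ {a | a - x ∈ Xpos}) ∩ {a | ‖a‖ ≤ K * ‖x‖ + 1} := by
        ext a
        simp only [Set.mem_inter_iff, Set.mem_setOf_eq, and_assoc]
      rw [h3]
      exact (hXpos_closed.inter h1).inter h2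
    have hsub : F x ⊆ {a : X | a ∈ Xpos ∧ a - x ∈ Xpos ∧ ‖a‖ ≤ K * ‖x‖ + 1} := by
      rintro a ⟨h1, h2, h3⟩
      exact ⟨h1, h2, h3.le⟩
    exact closure_minimal hsub hGclosed (hfm x)
  -- define p and m
  set p : X → X := fun x => if x = 0 then 0 else ‖x‖ • f (‖x‖⁻¹ • x) with hp
  set m : X → X := fun x => p x - x with hm
  have hp0 : p 0 = 0 := by rw [hp]; simp
  have hunit : ∀ x : X, x ≠ 0 → ‖(‖x‖⁻¹ • x)‖ = 1 := by
    intro x hx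
    rw [norm_smul, Real.norm_of_nonneg (by positivity)]
    exact inv_mul_cancel₀ (norm_ne_zero_iff.2 hx)
  have hpb : ∀ x : X, ‖p x‖ ≤ (K + 1) * ‖x‖ := by
    intro x
    rcases eq_or_ne x 0 with rfl | hx
    · rw [hp0]; simp
    · rw [hp]
      simp only [if_neg hx]
      rw [norm_smul, Real.norm_of_nonneg (norm_nonneg x)]
      have h1 : ‖f (‖x‖⁻¹ • x)‖ ≤ K * ‖(‖x‖⁻¹ • x)‖ + 1 := (hfG _).2.2
      rw [hunit x hx, mul_one] at h1
      calc ‖x‖ * ‖f (‖x‖⁻¹ • x)‖ ≤ ‖x‖ * (K + 1) := by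
            exact mul_le_mul_of_nonneg_left h1 (norm_nonneg x)
        _ = (K + 1) * ‖x‖ := by ring
  have hpcont : Continuous p := by
    rw [continuous_iff_continuousAt]
    intro x₀
    rcases eq_or_ne x₀ 0 with rfl | hx₀
    · unfold ContinuousAt
      rw [hp0]
      refine squeeze_zero_norm hpb ?_
      have h1 : Continuous fun x : X => (K + 1) * ‖x‖ := continuous_const.mul continuous_norm
      have := h1.tendsto 0
      simpa using this
    · have hq : ContinuousAt (fun x : X => ‖x‖ • f (‖x‖⁻¹ • x)) x₀ := by
        have h1 : ContinuousAt (fun x : X => ‖x‖⁻¹ • x) x₀ := by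
          exact ((continuous_norm.continuousAt).inv₀ (norm_ne_zero_iff.2 hx₀)).smul
            continuousAt_id
        exact (continuous_norm.continuousAt).smul (hfc.continuousAt.comp h1)
      refine hq.congr ?_
      filter_upwards [isOpen_ne.mem_nhds (show x₀ ≠ 0 from hx₀)] with x hx
      rw [hp]
      simp only [if_neg hx]
  have hppos : ∀ x : X, p x ∈ Xpos := by
    intro x
    rcases eq_or_ne x 0 with rfl | hx
    · rw [hp0]; exact hO
    · rw [hp]
      simp only [if_neg hx]
      exact hXpos_smul _ (norm_nonneg x) _ (hfG _).1
  have hsmulx : ∀ x : X, x ≠ 0 → ‖x‖ • (‖x‖⁻¹ • x) = x := fun x hx =>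
    smul_inv_smul₀ (norm_ne_zero_iff.2 hx) x
  have hmpos : ∀ x : X, m x ∈ Xpos := by
    intro x
    rcases eq_or_ne x 0 with rfl | hx
    · rw [hm]; simp only [hp0, sub_zero]; exact hO
    · rw [hm]
      simp only []
      rw [hp]
      simp only [if_neg hx]
      have h1 : ‖x‖ • f (‖x‖⁻¹ • x) - x = ‖x‖ • (f (‖x‖⁻¹ • x) - ‖x‖⁻¹ • x) := by
        rw [smul_sub, hsmulx x hx]
      rw [h1]
      exact hXpos_smul _ (norm_nonneg x) _ (hfG _).2.1
  have hphom : ∀ (t : ℝ), 0 ≤ t → ∀ x : X, p (t • x) = t • p x := by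
    intro t ht x
    rcases eq_or_lt_of_le ht with rfl | ht'
    · rw [zero_smul, hp0, zero_smul]
    rcases eq_or_ne x 0 with rfl | hx
    · rw [smul_zero, hp0, smul_zero]
    · have htx : t • x ≠ 0 := smul_ne_zero ht'.ne' hx
      rw [hp]
      simp only [if_neg htx, if_neg hx]
      have h1 : ‖t • x‖ = t * ‖x‖ := by
        rw [norm_smul, Real.norm_of_nonneg ht]
      have h2 : ‖t • x‖⁻¹ • (t • x) = ‖x‖⁻¹ • x := by
        rw [h1, mul_inv, smul_smul, mul_comm t⁻¹, mul_assoc, inv_mul_cancel₀ ht'.ne',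
          mul_one]
      rw [h2, h1, smul_smul]
  have hmhom : ∀ (t : ℝ), 0 ≤ t → ∀ x : X, m (t • x) = t • m x := by
    intro t ht x
    rw [hm]
    simp only []
    rw [hphom t ht x, smul_sub]
  have hxpm : ∀ x : X, x = p x - m x := by
    intro x
    rw [hm]
    simp only []
    abel
  have hmb : ∀ x : X, ‖m x‖ ≤ (K + 2) * ‖x‖ := by
    intro x
    rw [hm]
    simp only []
    calc ‖p x - x‖ ≤ ‖p x‖ + ‖x‖ := norm_sub_le _ _
      _ ≤ (K + 1) * ‖x‖ + ‖x‖ := by linarith [hpb x]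
      _ = (K + 2) * ‖x‖ := by ring
  refine ⟨2 * K + 3, by linarith, p, m, hpcont, ?_, hppos, hmpos, hphom, hmhom, hxpm, ?_⟩
  · rw [hm]; exact hpcont.sub continuous_id
  · intro x
    calc ‖p x‖ + ‖m x‖ ≤ (K + 1) * ‖x‖ + (K + 2) * ‖x‖ := by linarith [hpb x, hmb x]
      _ = (2 * K + 3) * ‖x‖ := by ring
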